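/- Let (T, θ) be a staged tree, G = {G₁,…,G_r} a partition of the leaf set of T, and T_G a gluing component consisting of one-level trees (B_i, t^{(i)}) with pairwise disjoint new label sets. Let [T, T_G] be the staged tree obtained by attaching a copy of B_i to each leaf in G_i. If the toric ideal ker(φ_T) ⊆ R[p]_T is homogeneous with respect to the multigrading A assigning degree e_i ∈ Z^r to each variable p_j with j ∈ G_i, then ker(φ_{[T,T_G]}) equals the toric fiber product ker(φ_T) ×_A ⟨0⟩, i.e. the kernel of the map ψ : R[p]_{[T,T_G]} → (R[p]_T/ker φ_T) ⊗_R R[p]_{T_G} sending p_{jk}^i ↦ p̄_j^i ⊗ p̄_k^i. -/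

import Mathlib

open MvPolynomial TensorProduct

/-- The variable-set equivalence used to split off the new labels. -/
def stmt8Equiv (L S : Type) : Option (L ⊕ S) ≃ S ⊕ Option L where
  toFun := fun x => match x with
    | none => Sum.inr none
    | some (Sum.inl l) => Sum.inr (some l)
    | some (Sum.inr s) => Sum.inl s
  invFun := fun x => match x with
    | Sum.inr none => none
    | Sum.inr (some l) => some (Sum.inl l)
    | Sum.inl s => some (Sum.inr s)
  left_inv := by rintro (_ | _ | _) <;> rfl
  right_inv := by rintro ((_) | (_ | _)) <;> rfl

set_option maxHeartbeats 2000000 in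
set_option synthInstance.maxHeartbeats 800000 in

/-- Toric fiber product construction for staged trees (Proposition `lem:tfp`):
`T` has leaves `ι`, each leaf `j` contributing the monomial `z · θ^(m j)`; `G : ι → Fin r` is
the partition of the leaves, and the one-level tree `B_i` glued along `G_i` has leaves `κ i`,
whose labels are fresh indeterminates.  If the toric ideal `ker φ_T` is homogeneous for the
multigrading `deg p_j = e_{G j}`, then the toric ideal of the glued tree `[T, T_G]` equals the
toric fiber product `ker φ_T ×_A ⟨0⟩`, i.e. the kernel of
`ψ : p_{jk} ↦ p̄_j ⊗ p̄_k`. -/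
theorem stmt8 {ι L : Type} {r : ℕ} (G : ι → Fin r) {κ : Fin r → Type}
    (m : ι → (L →₀ ℕ))
    -- the toric map of T (with homogenizing variable `none`)
    (φT : MvPolynomial ι ℝ →ₐ[ℝ] MvPolynomial (Option L) ℝ)
    (hφT : φT = MvPolynomial.aeval (fun j =>
      X (none : Option L) * monomial (Finsupp.mapDomain Option.some (m j)) 1))
    -- the toric map of the glued tree [T, T_G]
    (φG : MvPolynomial (Σ j : ι, κ (G j)) ℝ →ₐ[ℝ]
      MvPolynomial (Option (L ⊕ (Σ i : Fin r, κ i))) ℝ)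
    (hφG : φG = MvPolynomial.aeval (fun jk : Σ j : ι, κ (G j) =>
      X (none : Option (L ⊕ (Σ i : Fin r, κ i)))
        * monomial (Finsupp.mapDomain (fun l => Option.some (Sum.inl l)) (m jk.1)) 1
        * X (Option.some (Sum.inr ⟨G jk.1, jk.2⟩))))
    -- the toric fiber product map ψ : p_{jk} ↦ p̄_j ⊗ p̄_k
    (ψ : MvPolynomial (Σ j : ι, κ (G j)) ℝ →ₐ[ℝ]
      ((MvPolynomial ι ℝ ⧸ RingHom.ker φT.toRingHom) ⊗[ℝ] MvPolynomial (Σ i : Fin r, κ i) ℝ))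
    (hψ : ψ = MvPolynomial.aeval (R := ℝ) (fun jk : Σ j : ι, κ (G j) =>
      (Ideal.Quotient.mk (RingHom.ker φT.toRingHom) (X jk.1)) ⊗ₜ[ℝ]
        (X (R := ℝ) (⟨G jk.1, jk.2⟩ : Σ i : Fin r, κ i))))
    -- homogeneity of ker φ_T with respect to the multigrading deg p_j = e_{G j}
    (hhom : ∀ f ∈ RingHom.ker φT.toRingHom, ∀ d : Fin r →₀ ℕ,
      weightedHomogeneousComponent (fun j => Finsupp.single (G j) (1 : ℕ)) d f
        ∈ RingHom.ker φT.toRingHom) :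
    RingHom.ker φG.toRingHom = RingHom.ker ψ.toRingHom := by
  classical
  have hg₁inj : Function.Injective (Ideal.kerLiftAlg φT) := Ideal.kerLiftAlg_injective φT
  have hΘinj : Function.Injective
      (MvPolynomial.mapAlgHom (σ := Σ i : Fin r, κ i) (Ideal.kerLiftAlg φT)) := by
    have : (⇑(MvPolynomial.mapAlgHom (σ := Σ i : Fin r, κ i) (Ideal.kerLiftAlg φT)))
        = MvPolynomial.map ((Ideal.kerLiftAlg φT : _ →ₐ[ℝ] _) : _ →+* _) := rfl
    rw [this]
    exact MvPolynomial.map_injective _ hg₁inj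
  have key : ∀ f, (MvPolynomial.mapAlgHom (σ := Σ i : Fin r, κ i) (Ideal.kerLiftAlg φT))
      ((MvPolynomial.algebraTensorAlgEquiv ℝ
        (MvPolynomial ι ℝ ⧸ RingHom.ker φT.toRingHom)) (ψ f)) =
      ((renameEquiv ℝ (stmt8Equiv L (Σ i : Fin r, κ i))).trans
        (sumAlgEquiv ℝ (Σ i : Fin r, κ i) (Option L))) (φG f) := by
    have hcomp : ((MvPolynomial.mapAlgHom (σ := Σ i : Fin r, κ i)
          (Ideal.kerLiftAlg φT)).comp
        (((MvPolynomial.algebraTensorAlgEquiv ℝ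
          (MvPolynomial ι ℝ ⧸ RingHom.ker φT.toRingHom)).toAlgHom.restrictScalars ℝ).comp ψ)) =
        (((renameEquiv ℝ (stmt8Equiv L (Σ i : Fin r, κ i))).trans
          (sumAlgEquiv ℝ (Σ i : Fin r, κ i) (Option L))).toAlgHom.comp φG) := by
      apply MvPolynomial.algHom_ext
      rintro ⟨j, k⟩
      simp only [AlgHom.comp_apply, hψ, hφG, aeval_X, AlgHom.restrictScalars_apply,
        AlgEquiv.toAlgHom_eq_coe, AlgHom.coe_coe]
      erw [AlgHom.comp_apply, AlgHom.comp_apply, aeval_X, AlgHom.restrictScalars_apply]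
      simp only [AlgEquiv.coe_algHom]
      have htm := MvPolynomial.algebraTensorAlgEquiv_tmul (σ := Σ i : Fin r, κ i)
        (R := ℝ) (A := MvPolynomial ι ℝ ⧸ RingHom.ker φT.toRingHom)
        (Ideal.Quotient.mk (RingHom.ker φT.toRingHom) (X j))
        (X (⟨G j, k⟩ : Σ i : Fin r, κ i))
      erw [htm]
      rw [MvPolynomial.map_X, MvPolynomial.smul_eq_C_mul]
      rw [map_mul]
      have hC : (MvPolynomial.mapAlgHom (σ := Σ i : Fin r, κ i) (Ideal.kerLiftAlg φT))
          (C (Ideal.Quotient.mk (RingHom.ker φT.toRingHom) (X j))) = C (φT (X j)) := by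
        have h1 : (MvPolynomial.mapAlgHom (σ := Σ i : Fin r, κ i) (Ideal.kerLiftAlg φT))
            (C (Ideal.Quotient.mk (RingHom.ker φT.toRingHom) (X j))) =
            C ((Ideal.kerLiftAlg φT) (Ideal.Quotient.mk (RingHom.ker φT.toRingHom) (X j))) :=
          MvPolynomial.map_C _ _
        exact h1.trans (congrArg C (Ideal.kerLiftAlg_mk φT (X j)))
      have hXfac : (MvPolynomial.mapAlgHom (σ := Σ i : Fin r, κ i) (Ideal.kerLiftAlg φT))
          (X (⟨G j, k⟩ : Σ i : Fin r, κ i)) = X ⟨G j, k⟩ :=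
        MvPolynomial.map_X _ _
      refine Eq.trans ((map_mul _ _ _).trans (congrArg₂ (· * ·) hC hXfac)) ?_
      rw [hφT, aeval_X]
      -- now compute the RHS
      simp only [map_mul, AlgEquiv.trans_apply, renameEquiv_apply]
      rw [rename_X, rename_X]
      have hmon : (rename (stmt8Equiv L (Σ i : Fin r, κ i)))
          (monomial (Finsupp.mapDomain (fun l => Option.some (Sum.inl l)) (m j))
            (1 : ℝ)) =
          (rename (Sum.inr : Option L → (Σ i : Fin r, κ i) ⊕ Option L))
            (monomial (Finsupp.mapDomain Option.some (m j)) 1) := by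
        rw [rename_monomial, rename_monomial, ← Finsupp.mapDomain_comp,
          ← Finsupp.mapDomain_comp]
        rfl
      rw [hmon]
      have h1 : (sumAlgEquiv ℝ (Σ i : Fin r, κ i) (Option L))
          (X (stmt8Equiv L (Σ i : Fin r, κ i) none)) = C (X none) := by
        show (sumAlgEquiv ℝ (Σ i : Fin r, κ i) (Option L)) (X (Sum.inr none)) = _
        exact sumAlgEquiv_X_inr ℝ (Σ i : Fin r, κ i) (Option L) none
      have h2 : (sumAlgEquiv ℝ (Σ i : Fin r, κ i) (Option L))
          ((rename (Sum.inr : Option L → (Σ i : Fin r, κ i) ⊕ Option L))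
            (monomial (Finsupp.mapDomain Option.some (m j)) 1)) =
          C (monomial (Finsupp.mapDomain Option.some (m j)) 1) := by
        have := congrArg
          (fun F => F (monomial (Finsupp.mapDomain Option.some (m j)) (1 : ℝ)))
          (sumAlgEquiv_comp_rename_inr ℝ (Σ i : Fin r, κ i) (Option L))
        simpa using this
      have h3 : (sumAlgEquiv ℝ (Σ i : Fin r, κ i) (Option L))
          (X (stmt8Equiv L (Σ i : Fin r, κ i) (Option.some (Sum.inr ⟨G j, k⟩)))) =
          (X (⟨G j, k⟩ : Σ i : Fin r, κ i)
            : MvPolynomial (Σ i : Fin r, κ i) (MvPolynomial (Option L) ℝ)) := by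
        show (sumAlgEquiv ℝ (Σ i : Fin r, κ i) (Option L)) (X (Sum.inl ⟨G j, k⟩)) = _
        exact sumAlgEquiv_X_inl ℝ (Σ i : Fin r, κ i) (Option L) ⟨G j, k⟩
      rw [h1, h2, h3]
    intro f
    have := congrArg (fun F => F f) hcomp
    erw [AlgHom.comp_apply, AlgHom.comp_apply] at this
    exact this
  ext f
  simp only [RingHom.mem_ker, AlgHom.toRingHom_eq_coe, RingHom.coe_coe]
  constructor
  · intro h
    have h' : φG f = 0 := h
    have h0 := key f
    rw [h', map_zero] at h0
    have h2 := hΘinj (h0.trans (map_zero _).symm)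
    exact (MvPolynomial.algebraTensorAlgEquiv (σ := Σ i : Fin r, κ i) ℝ (MvPolynomial ι ℝ ⧸ RingHom.ker φT.toRingHom)).injective
      (h2.trans (map_zero _).symm)
  · intro h
    have h' : ψ f = 0 := h
    have h0 := key f
    rw [h'] at h0
    simp only [map_zero] at h0
    exact ((renameEquiv ℝ (stmt8Equiv L (Σ i : Fin r, κ i))).trans
      (sumAlgEquiv ℝ (Σ i : Fin r, κ i) (Option L))).injective
      (h0.symm.trans ((map_zero _).trans (map_zero _).symm))
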